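/- Every accepting run of a Petri automaton satisfying the safety and series-parallel constraints is proper: its last transition is the unique final transition fired (a transition with empty output appears exactly once, at the last step, reaching the empty state). Equivalently, in the trace graph of the run, the vertex corresponding to transition i is a sink if and only if transition i has empty output, and since the trace is series-parallel it has a single sink, which must be the last transition. -/

import Mathlib

/-- A 2-pointed labelled directed graph over label set `X`:
a finite vertex type, a set of labelled edges, and distinguished
input and output vertices. -/
structure PGraph (X : Type) where
  V : Type
  fin : Finite V
  E : Set (V × X × V)
  inp : V
  out : V

/-- A graph homomorphism preserves the input, the output, and labelled edges. -/
def IsHom {X : Type} (G H : PGraph X) (φ : G.V → H.V) : Prop :=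
  φ G.inp = H.inp ∧ φ G.out = H.out ∧
    ∀ p a q, (p, a, q) ∈ G.E → (φ p, a, φ q) ∈ H.E

/-- `gle G G'` (written `G ≲ G'`) iff there is a homomorphism from `G'` to `G`. -/
def gle {X : Type} (G G' : PGraph X) : Prop := ∃ φ : G'.V → G.V, IsHom G' G φ

/-- Graph of a variable: two vertices, one labelled edge from input to output. -/
def gvar {X : Type} (a : X) : PGraph X :=
  ⟨Bool, inferInstance, {(false, a, true)}, false, true⟩

/-- Graph of `1`: one vertex, no edges. -/
def gone {X : Type} : PGraph X := ⟨Unit, inferInstance, ∅, (), ()⟩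

/-- Graph of `⊤`: two isolated vertices. -/
def gtop {X : Type} : PGraph X := ⟨Bool, inferInstance, ∅, false, true⟩

/-- Converse of a graph: swap input and output. -/
def gconv {X : Type} (G : PGraph X) : PGraph X := ⟨G.V, G.fin, G.E, G.out, G.inp⟩

/-- Series composition: merge the output of `G` with the input of `H`. -/
def gseq {X : Type} (G H : PGraph X) : PGraph X :=
  let r : G.V ⊕ H.V → G.V ⊕ H.V → Prop :=
    fun x y => x = Sum.inl G.out ∧ y = Sum.inr H.inp
  { V := Quot r
    fin := by
      have := G.fin; have := H.fin
      exact Finite.of_surjective (Quot.mk r) (fun q => Quot.exists_rep q)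
    E := { e | (∃ p a q, (p, a, q) ∈ G.E ∧
                  e = (Quot.mk r (.inl p), a, Quot.mk r (.inl q)))
             ∨ (∃ p a q, (p, a, q) ∈ H.E ∧
                  e = (Quot.mk r (.inr p), a, Quot.mk r (.inr q))) }
    inp := Quot.mk r (.inl G.inp)
    out := Quot.mk r (.inr H.out) }

/-- Parallel composition: merge the inputs and merge the outputs. -/
def gpar {X : Type} (G H : PGraph X) : PGraph X :=
  let r : G.V ⊕ H.V → G.V ⊕ H.V → Prop :=
    fun x y => (x = Sum.inl G.inp ∧ y = Sum.inr H.inp) ∨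
               (x = Sum.inl G.out ∧ y = Sum.inr H.out)
  { V := Quot r
    fin := by
      have := G.fin; have := H.fin
      exact Finite.of_surjective (Quot.mk r) (fun q => Quot.exists_rep q)
    E := { e | (∃ p a q, (p, a, q) ∈ G.E ∧
                  e = (Quot.mk r (.inl p), a, Quot.mk r (.inl q)))
             ∨ (∃ p a q, (p, a, q) ∈ H.E ∧
                  e = (Quot.mk r (.inr p), a, Quot.mk r (.inr q))) }
    inp := Quot.mk r (.inl G.inp)
    out := Quot.mk r (.inl G.out) }

/-- Simple terms: variables, composition and intersection only. -/
inductive STrm (X : Type) : Type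
  | var : X → STrm X
  | comp : STrm X → STrm X → STrm X
  | inter : STrm X → STrm X → STrm X

/-- The (series-parallel) graph of a simple term. -/
def sgrOf {X : Type} : STrm X → PGraph X
  | .var a => gvar a
  | .comp u v => gseq (sgrOf u) (sgrOf v)
  | .inter u v => gpar (sgrOf u) (sgrOf v)

/-- A transition of a Petri automaton: a set of input places and a set of
labelled output places. -/
structure Transition (Y P : Type) where
  inp : Set P
  out : Set (Y × P)

/-- The set of places appearing in the output of a transition. -/
def outPlaces {Y P : Type} (t : Transition Y P) : Set P := {p | ∃ a, (a, p) ∈ t.out}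

/-- A Petri automaton: a set of transitions (each with nonempty input)
over a (finite) set of places, with an initial place. -/
structure PetriAut (Y P : Type) where
  trans : Set (Transition Y P)
  init : P
  inp_nonempty : ∀ t ∈ trans, t.inp.Nonempty

/-- Firing transition `t` from state `S`. -/
def fire {Y P : Type} (t : Transition Y P) (S : Set P) : Set P :=
  (S \ t.inp) ∪ outPlaces t

/-- `IsRun A S ts S'`: firing the transitions `ts` in sequence from state `S`
is possible in `A` and leads to state `S'`. -/
def IsRun {Y P : Type} (A : PetriAut Y P) :
    Set P → List (Transition Y P) → Set P → Prop
  | S, [], S' => S = S'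
  | S, t :: ts, S' => t ∈ A.trans ∧ t.inp ⊆ S ∧ IsRun A (fire t S) ts S'

/-- The `k`-th intermediate state of the run firing `ts` from `S`. -/
def runStates {Y P : Type} : Set P → List (Transition Y P) → ℕ → Set P
  | S, _, 0 => S
  | S, [], _ + 1 => S
  | S, t :: ts, k + 1 => runStates (fire t S) ts k

/-- The trace graph of an accepting run firing the nonempty list of
transitions `ts`: vertices are the transition indices, with an edge
`(k, a, l)` whenever `(a,p)` is an output of `t_k` and `l` is the least
index `> k` whose transition consumes `p`; the input is vertex `0` and
the output is the last vertex. -/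
def traceGraph {Y P : Type} (ts : List (Transition Y P)) (h : ts ≠ []) : PGraph Y where
  V := Fin ts.length
  fin := inferInstance
  E := { e | ∃ (k l : Fin ts.length) (a : Y) (p : P),
          (a, p) ∈ (ts.get k).out ∧ (k : ℕ) < (l : ℕ) ∧ p ∈ (ts.get l).inp ∧
          (∀ m : Fin ts.length, (k : ℕ) < (m : ℕ) → (m : ℕ) < (l : ℕ) →
            p ∉ (ts.get m).inp) ∧
          e = (k, a, l) }
  inp := ⟨0, List.length_pos_iff.mpr h⟩
  out := ⟨ts.length - 1, by have := List.length_pos_iff.mpr h; omega⟩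

/-- Graph isomorphism: a bijective homomorphism reflecting edges. -/
def IsIso {X : Type} (G H : PGraph X) : Prop :=
  ∃ φ : G.V → H.V, IsHom G H φ ∧ Function.Bijective φ ∧
    ∀ p a q, (φ p, a, φ q) ∈ H.E → (p, a, q) ∈ G.E

/-- A graph is series-parallel iff it is (isomorphic to) the graph of a
simple term. -/
def SeriesParallel {X : Type} (G : PGraph X) : Prop :=
  ∃ u : STrm X, IsIso G (sgrOf u)

/-- A state is reachable if some run from the initial state leads to it. -/
def Reachable {Y P : Type} (A : PetriAut Y P) (S : Set P) : Prop :=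
  ∃ ts, IsRun A {A.init} ts S

private lemma gseq_ne {X : Type} (G H : PGraph X) (hH : H.inp ≠ H.out) :
    (gseq G H).inp ≠ (gseq G H).out := by
  classical
  intro he
  let r : G.V ⊕ H.V → G.V ⊕ H.V → Prop :=
    fun x y => x = Sum.inl G.out ∧ y = Sum.inr H.inp
  let f : G.V ⊕ H.V → G.V ⊕ H.V := fun x => if x = Sum.inr H.inp then Sum.inl G.out else x
  have hf : ∀ x y, r x y → f x = f y := by
    rintro _ _ ⟨rfl, rfl⟩; simp [f]
  have key : f (Sum.inl G.inp) = f (Sum.inr H.out) := congrArg (Quot.lift f hf) he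
  simp only [f] at key
  rw [if_neg (by simp), if_neg (by simpa using Ne.symm hH)] at key
  exact absurd key (by simp)

private lemma gseq_succ {X : Type} (G H : PGraph X)
    (hG : ∀ v, v ≠ G.out → ∃ a w, (v, a, w) ∈ G.E)
    (hH : ∀ v, v ≠ H.out → ∃ a w, (v, a, w) ∈ H.E) :
    ∀ v : (gseq G H).V, v ≠ (gseq G H).out → ∃ a w, (v, a, w) ∈ (gseq G H).E := by
  intro v hv
  obtain ⟨x, rfl⟩ := Quot.exists_rep v
  match x with
  | Sum.inl p =>
    by_cases hp : p = G.out
    · subst hp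
      have heq : (Quot.mk _ (Sum.inl G.out) : (gseq G H).V) = Quot.mk _ (Sum.inr H.inp) :=
        Quot.sound ⟨rfl, rfl⟩
      have hne : H.inp ≠ H.out := by
        intro e
        exact hv (heq.trans (congrArg (fun z => Quot.mk _ (Sum.inr z)) e))
      obtain ⟨a, w, hw⟩ := hH H.inp hne
      refine ⟨a, Quot.mk _ (Sum.inr w), ?_⟩
      rw [show ((Quot.mk _ (Sum.inl G.out), a, Quot.mk _ (Sum.inr w)) :
            (gseq G H).V × X × (gseq G H).V) = (Quot.mk _ (Sum.inr H.inp), a,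
            Quot.mk _ (Sum.inr w)) by rw [heq]; rfl]
      exact Or.inr ⟨H.inp, a, w, hw, rfl⟩
    · obtain ⟨a, w, hw⟩ := hG p hp
      exact ⟨a, Quot.mk _ (Sum.inl w), Or.inl ⟨p, a, w, hw, rfl⟩⟩
  | Sum.inr q =>
    have hq : q ≠ H.out := fun e => hv (congrArg (fun z => Quot.mk _ (Sum.inr z)) e)
    obtain ⟨a, w, hw⟩ := hH q hq
    exact ⟨a, Quot.mk _ (Sum.inr w), Or.inr ⟨q, a, w, hw, rfl⟩⟩

private lemma gpar_ne {X : Type} (G H : PGraph X) (hG : G.inp ≠ G.out) (hH : H.inp ≠ H.out) :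
    (gpar G H).inp ≠ (gpar G H).out := by
  classical
  intro he
  let r : G.V ⊕ H.V → G.V ⊕ H.V → Prop :=
    fun x y => (x = Sum.inl G.inp ∧ y = Sum.inr H.inp) ∨
               (x = Sum.inl G.out ∧ y = Sum.inr H.out)
  let f : G.V ⊕ H.V → G.V := fun x =>
    match x with
    | Sum.inl p => p
    | Sum.inr q => if q = H.inp then G.inp else G.out
  have hf : ∀ x y, r x y → f x = f y := by
    rintro _ _ (⟨rfl, rfl⟩ | ⟨rfl, rfl⟩)
    · simp [f]
    · simp only [f]
      rw [if_neg (Ne.symm hH)]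
  have key : f (Sum.inl G.inp) = f (Sum.inl G.out) := congrArg (Quot.lift f hf) he
  exact hG key

private lemma gpar_succ {X : Type} (G H : PGraph X)
    (hG : ∀ v, v ≠ G.out → ∃ a w, (v, a, w) ∈ G.E)
    (hH : ∀ v, v ≠ H.out → ∃ a w, (v, a, w) ∈ H.E) :
    ∀ v : (gpar G H).V, v ≠ (gpar G H).out → ∃ a w, (v, a, w) ∈ (gpar G H).E := by
  intro v hv
  obtain ⟨x, rfl⟩ := Quot.exists_rep v
  match x with
  | Sum.inl p =>
    have hp : p ≠ G.out := fun e => hv (congrArg (fun z => Quot.mk _ (Sum.inl z)) e)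
    obtain ⟨a, w, hw⟩ := hG p hp
    exact ⟨a, Quot.mk _ (Sum.inl w), Or.inl ⟨p, a, w, hw, rfl⟩⟩
  | Sum.inr q =>
    have hq : q ≠ H.out := by
      intro e
      apply hv
      have h1 : (Quot.mk _ (Sum.inr q) : (gpar G H).V) = Quot.mk _ (Sum.inr H.out) :=
        congrArg (fun z => Quot.mk _ (Sum.inr z)) e
      have h2 : (gpar G H).out = (Quot.mk _ (Sum.inr H.out) : (gpar G H).V) :=
        Quot.sound (Or.inr ⟨rfl, rfl⟩)
      exact h1.trans h2.symm
    obtain ⟨a, w, hw⟩ := hH q hq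
    exact ⟨a, Quot.mk _ (Sum.inr w), Or.inr ⟨q, a, w, hw, rfl⟩⟩

private lemma sg_key {X : Type} (u : STrm X) :
    (sgrOf u).inp ≠ (sgrOf u).out ∧
    ∀ v : (sgrOf u).V, v ≠ (sgrOf u).out → ∃ a w, (v, a, w) ∈ (sgrOf u).E := by
  induction u with
  | var a =>
    refine ⟨by simp [sgrOf, gvar], ?_⟩
    intro v hv
    have hvf : v = false := by
      cases v
      · rfl
      · exact absurd rfl hv
    subst hvf
    exact ⟨a, true, rfl⟩
  | comp s t ihs iht =>
    exact ⟨gseq_ne _ _ iht.1, gseq_succ _ _ ihs.2 iht.2⟩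
  | inter s t ihs iht =>
    exact ⟨gpar_ne _ _ ihs.1 iht.1, gpar_succ _ _ ihs.2 iht.2⟩

private lemma last_out_empty {Y P : Type} (A : PetriAut Y P) :
    ∀ (ts : List (Transition Y P)) (S : Set P), IsRun A S ts ∅ → (h : ts ≠ []) →
      (ts.getLast h).out = ∅ := by
  intro ts
  induction ts with
  | nil => intro S _ h; exact absurd rfl h
  | cons t ts ih =>
    intro S hrun _
    obtain ⟨_, _, hrest⟩ := hrun
    cases ts with
    | nil =>
      have hfe : fire t S = ∅ := hrest
      have hop : outPlaces t = ∅ :=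
        Set.subset_empty_iff.mp (hfe ▸ (Set.subset_union_right :
          outPlaces t ⊆ (S \ t.inp) ∪ outPlaces t))
      have : t.out = ∅ := by
        ext x
        simp only [Set.mem_empty_iff_false, iff_false]
        intro hx
        have : x.2 ∈ outPlaces t := ⟨x.1, by simpa using hx⟩
        rw [hop] at this
        exact this
      simpa [List.getLast] using this
    | cons t' ts' =>
      rw [List.getLast_cons (List.cons_ne_nil t' ts')]
      exact ih (fire t S) hrest (List.cons_ne_nil t' ts')

/-- In a Petri automaton satisfying the safety constraint and whose accepting
runs all have series-parallel traces, every accepting run is proper: any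
transition with empty output is the last one fired. -/
theorem accepting_run_proper {Y P : Type} [Finite P] (A : PetriAut Y P)
    (hsafe : ∀ S, Reachable A S → ∀ t ∈ A.trans, t.inp ⊆ S →
      (S \ t.inp) ∩ outPlaces t = ∅)
    (hsp : ∀ (ts : List (Transition Y P)) (h : ts ≠ []),
      IsRun A {A.init} ts ∅ → SeriesParallel (traceGraph ts h))
    (ts : List (Transition Y P)) (h : ts ≠ []) (hrun : IsRun A {A.init} ts ∅) :
    (∀ i : Fin ts.length, (ts.get i).out = ∅ ↔ (i : ℕ) = ts.length - 1) := by
  intro i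
  have hlen : 0 < ts.length := List.length_pos_iff.mpr h
  constructor
  · intro hout
    obtain ⟨u, φ, hhom, hbij, hrefl⟩ := hsp ts h hrun
    have hsink : ∀ (a : Y) (q : Fin ts.length),
        ((i, a, q) : (traceGraph ts h).V × Y × (traceGraph ts h).V) ∉ (traceGraph ts h).E := by
      rintro a q ⟨k, l, b, p, hm, -, -, -, heq⟩
      injection heq with h1 h23
      injection h23 with h2 h3
      subst h1
      rw [hout] at hm
      exact hm
    have hiout : φ i = (sgrOf u).out := by
      by_contra hne
      obtain ⟨a, w, hw⟩ := (sg_key u).2 (φ i) hne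
      obtain ⟨q, rfl⟩ := hbij.2 w
      exact hsink a q (hrefl i a q hw)
    have hio : φ i = φ (traceGraph ts h).out := by rw [hhom.2.1, hiout]
    have := hbij.1 hio
    exact congrArg Fin.val this
  · intro hi
    have hl := last_out_empty A ts {A.init} hrun h
    rw [List.getLast_eq_getElem] at hl
    have : i = ⟨ts.length - 1, by omega⟩ := Fin.ext hi
    rwa [this]
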